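/- Let $(B_r)_{r \geq 1}$ be a sequence of standard Brownian motions on a common probability space, and fix $T > 0$, $C > 0$, $\epsilon \in (0, 1/4)$. Then almost surely, for all sufficiently large $r$, every pair $t_1, t_2 \in [0, T \log r]$ with $|t_2 - t_1| \le C r^{-1/2 + \epsilon}$ satisfies $|B_r(t_2) - B_r(t_1)| < r^{-1/8}$. -/

import Mathlib

set_option maxHeartbeats 1000000

open MeasureTheory ProbabilityTheory

/-- A standard one-dimensional Brownian motion: starts at 0, has continuous paths,
Gaussian increments of variance `t - s`, and independent increments. -/
def IsStandardBM {Ω : Type*} [MeasureSpace Ω] (W : ℝ → Ω → ℝ) : Prop :=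
  (∀ ω, W 0 ω = 0) ∧
  (∀ ω, Continuous fun t => W t ω) ∧
  (∀ s t : ℝ, 0 ≤ s → s ≤ t →
    Measure.map (fun ω => W t ω - W s ω) MeasureTheory.volume
      = gaussianReal 0 (Real.toNNReal (t - s))) ∧
  (∀ n : ℕ, ∀ t : ℕ → ℝ, Monotone t → 0 ≤ t 0 →
    iIndepFun
      (fun (i : Fin n) ω => W (t (i + 1)) ω - W (t i) ω) MeasureTheory.volume)

open Filter Real

lemma gauss_tail (v : NNReal) (hv : v ≠ 0) (c : ℝ) (hc : 0 ≤ c) :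
    gaussianReal 0 v {x : ℝ | c ≤ |x|} ≤ ENNReal.ofReal (Real.sqrt 2 * Real.exp (-(c^2) / (4*v))) := by
  have hvpos : (0:ℝ) < v := lt_of_le_of_ne v.coe_nonneg (by exact_mod_cast (Ne.symm hv))
  rw [gaussianReal_apply _ hv]
  have hb : (0:ℝ) < 1/(4*v) := by positivity
  set K : ℝ := (Real.sqrt (2 * π * v))⁻¹ * Real.exp (-(c^2) / (4*v)) with hK
  have hKnn : 0 ≤ K := by positivity
  have hs : MeasurableSet {x : ℝ | c ≤ |x|} :=
    measurableSet_le measurable_const measurable_abs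
  have step1 : ∫⁻ x in {x : ℝ | c ≤ |x|}, gaussianPDF 0 v x
      ≤ ∫⁻ x : ℝ, ENNReal.ofReal (K * Real.exp (-(1/(4*v)) * x^2)) := by
    refine le_trans (setLIntegral_mono' hs (fun x hx => ?_)) (setLIntegral_le_lintegral _ _)
    apply ENNReal.ofReal_le_ofReal
    rw [gaussianPDFReal]
    have hx' : c ≤ |x| := hx
    have hx2 : c^2 ≤ x^2 := by nlinarith [sq_abs x, abs_nonneg x]
    rw [hK]
    have hE : rexp (-(x - 0)^2 / (2*v)) ≤ rexp (-c^2 / (4*v)) * rexp (-(1/(4*v)) * x^2) := by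
      rw [← Real.exp_add]
      apply Real.exp_le_exp.2
      have h1 : (x - 0)^2 = x^2 := by ring
      rw [h1, show -(1/(4*(v:ℝ))) * x^2 = -x^2/(4*(v:ℝ)) by field_simp,
        ← add_div, div_le_div_iff₀ (by positivity) (by positivity)]
      nlinarith [mul_nonneg (le_of_lt hvpos) (sub_nonneg.2 hx2)]
    refine le_trans (mul_le_mul_of_nonneg_left hE (inv_nonneg.2 (Real.sqrt_nonneg _)))
      (le_of_eq (by ring))
  refine le_trans step1 (le_of_eq ?_)
  have hint : Integrable (fun x : ℝ => Real.exp (-(1/(4*(v:ℝ))) * x^2)) := integrable_exp_neg_mul_sq hb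
  have : ∫⁻ x : ℝ, ENNReal.ofReal (K * Real.exp (-(1/(4*v)) * x^2))
      = ENNReal.ofReal (∫ x : ℝ, K * Real.exp (-(1/(4*v)) * x^2)) := by
    rw [ofReal_integral_eq_lintegral_ofReal (hint.const_mul K)
      (ae_of_all _ (fun x => by positivity))]
  rw [this, integral_const_mul, integral_gaussian]
  congr 1
  rw [hK]
  have h2v : Real.sqrt (π / (1/(4*v))) = Real.sqrt 2 * Real.sqrt (2*π*v) := by
    rw [← Real.sqrt_mul (by norm_num)]
    congr 1
    field_simp
    ring
  rw [h2v]
  have hne : Real.sqrt (2*π*v) ≠ 0 := by positivity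
  field_simp

lemma inc_tail {Ω : Type*} [MeasureSpace Ω] {W : ℝ → Ω → ℝ} (hW : IsStandardBM W)
    {s t : ℝ} (hs : 0 ≤ s) (hst : s < t) {c : ℝ} (hc : 0 ≤ c) :
    volume {ω | c ≤ |W t ω - W s ω|}
      ≤ ENNReal.ofReal (Real.sqrt 2 * Real.exp (-(c^2) / (4*(t-s)))) := by
  have hmap := hW.2.2.1 s t hs (le_of_lt hst)
  set X : Ω → ℝ := fun ω => W t ω - W s ω with hX
  have hae : AEMeasurable X (volume : Measure Ω) := by
    by_contra h
    have h0 : Measure.map X volume = 0 := Measure.map_of_not_aemeasurable h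
    rw [hmap] at h0
    exact (IsProbabilityMeasure.ne_zero _) h0
  have hSm : MeasurableSet {x : ℝ | c ≤ |x|} :=
    measurableSet_le measurable_const measurable_abs
  have key : volume {ω | c ≤ |X ω|} = gaussianReal 0 (Real.toNNReal (t-s)) {x : ℝ | c ≤ |x|} := by
    rw [← hmap, Measure.map_apply_of_aemeasurable hae hSm]
    rfl
  rw [key]
  have hpos : 0 < t - s := sub_pos.2 hst
  have hv : Real.toNNReal (t - s) ≠ 0 := by
    simp [Real.toNNReal_eq_zero, not_le]; linarith
  have := gauss_tail _ hv c hc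
  rwa [Real.coe_toNNReal _ (le_of_lt hpos)] at this

/-- Level-`n` dyadic approximation from below. -/
noncomputable def dyadApp (n : ℕ) (t : ℝ) : ℝ := (⌊t * 2^n⌋₊ : ℝ) / 2^n

lemma dyadApp_le {t : ℝ} (ht : 0 ≤ t) (n : ℕ) : dyadApp n t ≤ t := by
  rw [dyadApp, div_le_iff₀ (by positivity)]
  exact Nat.floor_le (by positivity)

lemma lt_dyadApp_add (n : ℕ) (t : ℝ) : t < dyadApp n t + 1/2^n := by
  rw [dyadApp, ← add_div, lt_div_iff₀ (by positivity)]
  have := Nat.lt_floor_add_one (t * 2^n)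
  linarith

lemma dyadApp_nonneg (n : ℕ) (t : ℝ) : 0 ≤ dyadApp n t := by
  rw [dyadApp]; positivity

lemma dyadApp_tendsto {t : ℝ} (ht : 0 ≤ t) : Tendsto (fun n => dyadApp n t) atTop (nhds t) := by
  have h2 : Tendsto (fun n : ℕ => 1/(2:ℝ)^n) atTop (nhds 0) := by
    simpa [one_div, inv_pow] using
      tendsto_pow_atTop_nhds_zero_of_lt_one (by norm_num : (0:ℝ) ≤ 2⁻¹) (by norm_num)
  have hup : Tendsto (fun n : ℕ => t - 1/(2:ℝ)^n) atTop (nhds t) := by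
    simpa using tendsto_const_nhds.sub h2
  refine tendsto_of_tendsto_of_tendsto_of_le_of_le hup tendsto_const_nhds
    (fun n => ?_) (fun n => dyadApp_le ht n)
  have := lt_dyadApp_add n t
  linarith

lemma dyadApp_floor_succ (n : ℕ) (t : ℝ) :
    ⌊t * 2^(n+1)⌋₊ = 2 * ⌊t * 2^n⌋₊ ∨ ⌊t * 2^(n+1)⌋₊ = 2 * ⌊t * 2^n⌋₊ + 1 := by
  rcases le_or_gt t 0 with h | h
  · left
    have h1 : ⌊t * 2^n⌋₊ = 0 := Nat.floor_of_nonpos (by nlinarith [pow_pos (by norm_num : (0:ℝ)<2) n])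
    have h2 : ⌊t * 2^(n+1)⌋₊ = 0 := Nat.floor_of_nonpos (by nlinarith [pow_pos (by norm_num : (0:ℝ)<2) (n+1)])
    omega
  · set k := ⌊t * 2^n⌋₊ with hk
    have hkle : (k:ℝ) ≤ t * 2^n := Nat.floor_le (by positivity)
    have hklt : t * 2^n < k + 1 := Nat.lt_floor_add_one _
    have hlow : 2*k ≤ ⌊t * 2^(n+1)⌋₊ := by
      apply Nat.le_floor
      push_cast
      rw [pow_succ]
      nlinarith
    have hhigh : ⌊t * 2^(n+1)⌋₊ < 2*k + 2 := by
      apply Nat.floor_lt' (by omega) |>.2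
      push_cast
      rw [pow_succ]
      nlinarith
    omega

lemma chainA {f : ℝ → ℝ} (hf : Continuous f) {L a : ℝ} (ha : 0 ≤ a) (n₀ : ℕ)
    (H : ∀ m : ℕ, n₀ ≤ m → ∀ k : ℕ, (k:ℝ)/2^m ≤ L →
      |f (((k:ℝ)+1)/2^m) - f ((k:ℝ)/2^m)| ≤ a * (3/4)^(m - n₀))
    {t : ℝ} (ht : t ∈ Set.Icc 0 L) : |f t - f (dyadApp n₀ t)| ≤ 3 * a := by
  obtain ⟨ht0, htL⟩ := ht
  have key : ∀ j : ℕ, |f (dyadApp (n₀ + j) t) - f (dyadApp n₀ t)|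
      ≤ a * (3 - 3 * (3/4)^j) := by
    intro j
    induction j with
    | zero => simp
    | succ j ih =>
      have hstep : |f (dyadApp (n₀ + j + 1) t) - f (dyadApp (n₀ + j) t)|
          ≤ a * (3/4)^(j+1) := by
        rcases dyadApp_floor_succ (n₀ + j) t with h | h
        · have : dyadApp (n₀ + j + 1) t = dyadApp (n₀ + j) t := by
            rw [dyadApp, dyadApp, h]
            push_cast
            rw [pow_succ]
            field_simp
          rw [this]
          simpa using by positivity
        · have h2 : dyadApp (n₀ + j) t = ((2 * ⌊t * 2^(n₀+j)⌋₊ : ℕ) : ℝ) / 2^(n₀+j+1) := by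
            rw [dyadApp]
            push_cast
            rw [pow_succ]
            field_simp
          have h3 : dyadApp (n₀ + j + 1) t
              = (((2 * ⌊t * 2^(n₀+j)⌋₊ : ℕ) : ℝ) + 1) / 2^(n₀+j+1) := by
            rw [dyadApp, h]; push_cast; ring
          have hle : ((2 * ⌊t * 2^(n₀+j)⌋₊ : ℕ) : ℝ) / 2^(n₀+j+1) ≤ L := by
            rw [← h2]; exact le_trans (dyadApp_le ht0 _) htL
          have := H (n₀+j+1) (by omega) (2 * ⌊t * 2^(n₀+j)⌋₊) hle
          rw [← h2, ← h3, show n₀+j+1-n₀ = j+1 from by omega] at this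
          exact this
      calc |f (dyadApp (n₀ + (j+1)) t) - f (dyadApp n₀ t)|
          ≤ |f (dyadApp (n₀ + j + 1) t) - f (dyadApp (n₀ + j) t)|
            + |f (dyadApp (n₀ + j) t) - f (dyadApp n₀ t)| := by
            rw [show n₀ + (j+1) = n₀ + j + 1 by omega]
            exact abs_sub_le _ _ _
        _ ≤ a * (3/4)^(j+1) + a * (3 - 3 * (3/4)^j) := add_le_add hstep ih
        _ ≤ a * (3 - 3 * (3/4)^(j+1)) := by
            rw [pow_succ]
            nlinarith [pow_nonneg (by norm_num : (0:ℝ) ≤ 3/4) j, ha]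
  have hconv : Tendsto (fun j : ℕ => |f (dyadApp (n₀ + j) t) - f (dyadApp n₀ t)|) atTop
      (nhds (|f t - f (dyadApp n₀ t)|)) := by
    have h0 : Tendsto (fun j : ℕ => n₀ + j) atTop atTop := by
      simpa [Nat.add_comm] using tendsto_add_atTop_nat n₀
    have h1 : Tendsto (fun j : ℕ => dyadApp (n₀ + j) t) atTop (nhds t) :=
      (dyadApp_tendsto ht0).comp h0
    exact (((hf.tendsto t).comp h1).sub tendsto_const_nhds).abs
  refine le_of_tendsto hconv (Filter.Eventually.of_forall fun j => le_trans (key j) ?_)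
  nlinarith [pow_nonneg (by norm_num : (0:ℝ) ≤ 3/4) j, ha]

lemma chainB {f : ℝ → ℝ} {L a : ℝ} (ha : 0 ≤ a) (n₀ : ℕ)
    (H : ∀ m : ℕ, n₀ ≤ m → ∀ k : ℕ, (k:ℝ)/2^m ≤ L →
      |f (((k:ℝ)+1)/2^m) - f ((k:ℝ)/2^m)| ≤ a * (3/4)^(m - n₀))
    {t₁ t₂ : ℝ} (h1 : 0 ≤ t₁) (h12 : t₁ ≤ t₂) (h2L : t₂ ≤ L)
    (hd : t₂ - t₁ ≤ 2/2^n₀) :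
    |f (dyadApp n₀ t₂) - f (dyadApp n₀ t₁)| ≤ 3 * a := by
  set k₁ := ⌊t₁ * 2^n₀⌋₊ with hk₁
  set k₂ := ⌊t₂ * 2^n₀⌋₊ with hk₂
  have hkk : k₁ ≤ k₂ := Nat.floor_le_floor (by nlinarith [pow_pos (by norm_num : (0:ℝ)<2) n₀])
  have hk2le : k₂ ≤ k₁ + 2 := by
    have h1' : (k₂ : ℝ) ≤ t₂ * 2^n₀ := Nat.floor_le (mul_nonneg (le_trans h1 h12) (by positivity))
    have h2' : t₁ * 2^n₀ < (k₁ : ℝ) + 1 := Nat.lt_floor_add_one _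
    have hp : (0:ℝ) < 2^n₀ := by positivity
    have h3' : t₂ * 2^n₀ ≤ t₁ * 2^n₀ + 2 := by
      have := mul_le_mul_of_nonneg_right hd (le_of_lt hp)
      rw [div_mul_cancel₀ _ (ne_of_gt hp)] at this
      nlinarith
    have hfin : (k₂ : ℝ) < (k₁ : ℝ) + 3 := by linarith
    have : k₂ < k₁ + 3 := by exact_mod_cast hfin
    omega
  have hstep : ∀ k : ℕ, k₁ ≤ k → k < k₂ → |f (((k:ℝ)+1)/2^n₀) - f ((k:ℝ)/2^n₀)| ≤ a := by
    intro k hk hk'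
    have hkL : (k:ℝ)/2^n₀ ≤ L := by
      have hkk2 : (k:ℝ) ≤ (k₂:ℝ) := by exact_mod_cast le_of_lt hk'
      have h2 : (k₂:ℝ)/2^n₀ = dyadApp n₀ t₂ := by rw [dyadApp, ← hk₂]
      calc (k:ℝ)/2^n₀ ≤ (k₂:ℝ)/2^n₀ := by gcongr
        _ ≤ t₂ := h2 ▸ dyadApp_le (le_trans h1 h12) n₀
        _ ≤ L := h2L
    have := H n₀ le_rfl k hkL
    simpa using this
  have hd1 : dyadApp n₀ t₁ = (k₁:ℝ)/2^n₀ := by rw [dyadApp, ← hk₁]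
  have hd2 : dyadApp n₀ t₂ = (k₂:ℝ)/2^n₀ := by rw [dyadApp, ← hk₂]
  rw [hd1, hd2]
  obtain ⟨j, hj, hjk⟩ : ∃ j, j ≤ 2 ∧ k₂ = k₁ + j := ⟨k₂ - k₁, by omega, by omega⟩
  rw [hjk]
  interval_cases j
  · norm_num
    positivity
  · have hA := hstep k₁ le_rfl (by omega)
    push_cast at hA ⊢
    calc |f (((k₁:ℝ)+1)/2^n₀) - f ((k₁:ℝ)/2^n₀)| ≤ a := hA
      _ ≤ 3 * a := by linarith
  · have hA := hstep k₁ le_rfl (by omega)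
    have hB := hstep (k₁+1) (by omega) (by omega)
    push_cast at hA hB ⊢
    calc |f (((k₁:ℝ)+2)/2^n₀) - f ((k₁:ℝ)/2^n₀)|
        ≤ |f (((k₁:ℝ)+2)/2^n₀) - f (((k₁:ℝ)+1)/2^n₀)|
          + |f (((k₁:ℝ)+1)/2^n₀) - f ((k₁:ℝ)/2^n₀)| := abs_sub_le _ _ _
      _ ≤ a + a := by
          refine add_le_add ?_ hA
          have he : ((k₁:ℝ)+1) + 1 = (k₁:ℝ) + 2 := by ring
          rw [← he]
          exact hB
      _ ≤ 3 * a := by linarith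

lemma chainMain {f : ℝ → ℝ} (hf : Continuous f) {L a : ℝ} (ha : 0 ≤ a) (n₀ : ℕ)
    (H : ∀ m : ℕ, n₀ ≤ m → ∀ k : ℕ, (k:ℝ)/2^m ≤ L →
      |f (((k:ℝ)+1)/2^m) - f ((k:ℝ)/2^m)| ≤ a * (3/4)^(m - n₀))
    {t₁ t₂ : ℝ} (h1 : t₁ ∈ Set.Icc 0 L) (h2 : t₂ ∈ Set.Icc 0 L)
    (hd : |t₂ - t₁| ≤ 2/2^n₀) : |f t₂ - f t₁| ≤ 9 * a := by
  have main : ∀ s₁ s₂ : ℝ, s₁ ∈ Set.Icc 0 L → s₂ ∈ Set.Icc 0 L → s₁ ≤ s₂ →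
      s₂ - s₁ ≤ 2/2^n₀ → |f s₂ - f s₁| ≤ 9 * a := by
    intro s₁ s₂ hs1 hs2 h12 hdd
    have hA := chainA hf ha n₀ H hs2
    have hB := chainA hf ha n₀ H hs1
    have hM := chainB ha n₀ H hs1.1 h12 hs2.2 hdd
    calc |f s₂ - f s₁| ≤ |f s₂ - f (dyadApp n₀ s₂)| + |f (dyadApp n₀ s₂) - f s₁| :=
          abs_sub_le _ _ _
      _ ≤ |f s₂ - f (dyadApp n₀ s₂)|
          + (|f (dyadApp n₀ s₂) - f (dyadApp n₀ s₁)| + |f (dyadApp n₀ s₁) - f s₁|) := by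
          linarith [abs_sub_le (f (dyadApp n₀ s₂)) (f (dyadApp n₀ s₁)) (f s₁),
            abs_sub_comm (f (dyadApp n₀ s₁)) (f s₁)]
      _ ≤ 3*a + (3*a + 3*a) := by
          refine add_le_add hA (add_le_add hM ?_)
          rw [abs_sub_comm]
          exact hB
      _ = 9 * a := by ring
  rcases le_total t₁ t₂ with h | h
  · exact main t₁ t₂ h1 h2 h (by rw [abs_of_nonneg (by linarith)] at hd; linarith)
  · rw [abs_sub_comm]
    exact main t₂ t₁ h2 h1 h (by rw [abs_sub_comm, abs_of_nonneg (by linarith)] at hd; linarith)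

noncomputable def bmN0 (C ε : ℝ) (r : ℕ) : ℕ := ⌈Real.logb 2 (C⁻¹ * (r:ℝ)^((1:ℝ)/2 - ε))⌉₊
noncomputable def bmA (r : ℕ) : ℝ := (r:ℝ)^(-(1:ℝ)/8) / 10
noncomputable def bmE (C ε : ℝ) (r : ℕ) : ℝ := (bmA r)^2/4 * 2^(bmN0 C ε r)

def bmBad {Ω : Type*} [MeasureSpace Ω] (B : ℕ → ℝ → Ω → ℝ) (T C ε : ℝ) (r : ℕ) : Set Ω :=
  ⋃ (m : ℕ) (k : ℕ), {ω | bmN0 C ε r ≤ m ∧ (k:ℝ)/2^m ≤ T * Real.log r ∧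
    bmA r * (3/4)^(m - bmN0 C ε r) < |B r (((k:ℝ)+1)/2^m) ω - B r ((k:ℝ)/2^m) ω|}

lemma pow_n0 {C ε : ℝ} (hC : 0 < C) {r : ℕ} (h1 : 1 ≤ C⁻¹ * (r:ℝ)^((1:ℝ)/2-ε)) :
    C⁻¹ * (r:ℝ)^((1:ℝ)/2-ε) ≤ 2^(bmN0 C ε r) ∧
      (2:ℝ)^(bmN0 C ε r) ≤ 2*(C⁻¹*(r:ℝ)^((1:ℝ)/2-ε)) := by
  set y := C⁻¹ * (r:ℝ)^((1:ℝ)/2-ε) with hy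
  have hy0 : 0 < y := lt_of_lt_of_le one_pos h1
  have hlb : 0 ≤ Real.logb 2 y := Real.logb_nonneg one_lt_two h1
  have hrw : ∀ n : ℕ, (2:ℝ)^n = (2:ℝ)^((n:ℝ)) := fun n => (Real.rpow_natCast 2 n).symm
  constructor
  · rw [hrw]
    calc y = (2:ℝ)^(Real.logb 2 y) := (Real.rpow_logb two_pos (by norm_num) hy0).symm
      _ ≤ (2:ℝ)^((bmN0 C ε r : ℝ)) := by
          apply Real.rpow_le_rpow_of_exponent_le one_le_two
          exact_mod_cast Nat.le_ceil _
  · rw [hrw]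
    calc (2:ℝ)^((bmN0 C ε r : ℝ)) ≤ (2:ℝ)^(Real.logb 2 y + 1) := by
          apply Real.rpow_le_rpow_of_exponent_le one_le_two
          have := Nat.ceil_lt_add_one hlb
          rw [bmN0, ← hy]
          exact_mod_cast le_of_lt this
      _ = 2*y := by
          rw [Real.rpow_add two_pos, Real.rpow_logb two_pos (by norm_num) hy0,
            Real.rpow_one]
          ring

lemma eventual_facts (T C ε : ℝ) (hT : 0 < T) (hC : 0 < C) (hε : ε ∈ Set.Ioo (0:ℝ) (1/4)) :
    ∀ᶠ r : ℕ in atTop, (0 ≤ T * Real.log r) ∧ (16 ≤ bmE C ε r) ∧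
      (3 * ((T * Real.log r) + 1) * 4^(bmN0 C ε r) * Real.exp (-(bmE C ε r)) ≤ 1/(r:ℝ)^2) ∧
      (C * (r:ℝ)^(-(1:ℝ)/2+ε) ≤ 2/2^(bmN0 C ε r)) ∧ (0 < (r:ℝ)) := by
  obtain ⟨hε0, hε4⟩ := hε
  set κ : ℝ := 1/4 - ε with hκdef
  have hκ : 0 < κ := by rw [hκdef]; linarith
  have h12ε : (0:ℝ) < 1/2 - ε := by linarith
  set M : ℝ := 12*(T+1)*C⁻¹*C⁻¹ with hM
  have hM0 : 0 < M := by positivity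
  have hx : Tendsto (fun r : ℕ => (r:ℝ)) atTop atTop := tendsto_natCast_atTop_atTop
  have e1 : ∀ᶠ r : ℕ in atTop, (1:ℝ) ≤ (r:ℝ) := hx.eventually_ge_atTop 1
  have e2 : ∀ᶠ r : ℕ in atTop, C ≤ (r:ℝ)^((1:ℝ)/2-ε) :=
    ((tendsto_rpow_atTop h12ε).comp hx).eventually_ge_atTop C
  have e3 : ∀ᶠ r : ℕ in atTop, 16*400*C ≤ (r:ℝ)^κ :=
    ((tendsto_rpow_atTop hκ).comp hx).eventually_ge_atTop _
  have e4 : ∀ᶠ r : ℕ in atTop, max 1 (400*C*(|Real.log M| + 10/κ)) ≤ (r:ℝ)^(κ/2) :=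
    ((tendsto_rpow_atTop (by positivity)).comp hx).eventually_ge_atTop _
  filter_upwards [e1, e2, e3, e4] with r h1 h2 h3 h4
  set x : ℝ := (r:ℝ) with hxdef
  have hx0 : (0:ℝ) < x := lt_of_lt_of_le one_pos h1
  have hlogx : 0 ≤ Real.log x := Real.log_nonneg h1
  -- basic quantities
  have hy1 : 1 ≤ C⁻¹ * x^((1:ℝ)/2-ε) := by
    have h := mul_le_mul_of_nonneg_left h2 (inv_nonneg.2 hC.le)
    rwa [inv_mul_cancel₀ hC.ne'] at h
  obtain ⟨hn1, hn2⟩ := pow_n0 hC hy1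
  set n₀ := bmN0 C ε r with hn₀
  -- A^2
  have hA2 : (bmA r)^2 = x^(-(1:ℝ)/4)/100 := by
    rw [bmA, div_pow, ← Real.rpow_natCast (x^(-(1:ℝ)/8)) 2, ← Real.rpow_mul hx0.le]
    norm_num
  -- E lower bound
  have hφ : (C⁻¹/400) * x^κ ≤ bmE C ε r := by
    rw [bmE, ← hn₀, hA2]
    have step : (C⁻¹ * x^((1:ℝ)/2-ε)) * (x^(-(1:ℝ)/4)/400) ≤ (2:ℝ)^n₀ * (x^(-(1:ℝ)/4)/400) :=
      mul_le_mul_of_nonneg_right hn1 (by positivity)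
    calc (C⁻¹/400) * x^κ = (C⁻¹ * x^((1:ℝ)/2-ε)) * (x^(-(1:ℝ)/4)/400) := by
          rw [hκdef, show (1:ℝ)/4 - ε = ((1:ℝ)/2 - ε) + (-(1:ℝ)/4) by ring,
            Real.rpow_add hx0]
          ring
      _ ≤ (2:ℝ)^n₀ * (x^(-(1:ℝ)/4)/400) := step
      _ = x^(-(1:ℝ)/4)/100/4 * 2^n₀ := by ring
  refine ⟨mul_nonneg hT.le hlogx, ?_, ?_, ?_, hx0⟩
  · -- 16 ≤ bmE
    refine le_trans ?_ hφ
    have h16 : (16:ℝ) = (C⁻¹/400)*(16*400*C) := by field_simp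
    rw [h16]
    exact mul_le_mul_of_nonneg_left h3 (by positivity)
  · -- the numeric bound
    set u := x^(κ/2) with hu
    have hu1 : (1:ℝ) ≤ u := le_trans (le_max_left _ _) h4
    have hu2 : 400*C*(|Real.log M| + 10/κ) ≤ u := le_trans (le_max_right _ _) h4
    have hu0 : (0:ℝ) < u := lt_of_lt_of_le one_pos hu1
    have hxκ : x^κ = u * u := by
      rw [hu, ← Real.rpow_add hx0]
      congr 1
      ring
    have hlogu : Real.log x ≤ (2/κ) * u := by
      have h5 : Real.log u = (κ/2) * Real.log x := Real.log_rpow hx0 _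
      have h6 : Real.log u ≤ u - 1 := Real.log_le_sub_one_of_pos hu0
      calc Real.log x = (2/κ) * ((κ/2) * Real.log x) := by field_simp
        _ = (2/κ) * Real.log u := by rw [h5]
        _ ≤ (2/κ) * u := mul_le_mul_of_nonneg_left (by linarith) (by positivity)
    have hkey : Real.log M + 5 * Real.log x ≤ (C⁻¹/400) * x^κ := by
      have hLM : Real.log M ≤ |Real.log M| * u :=
        le_trans (le_abs_self _) (le_mul_of_one_le_right (abs_nonneg _) hu1)
      have h5log : 5 * Real.log x ≤ (10/κ) * u := by
        have hr : (10:ℝ)/κ * u = 5*((2/κ)*u) := by ring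
        linarith [hlogu]
      have hquad : (|Real.log M| + 10/κ) * u ≤ (C⁻¹/400) * (u*u) := by
        have hm := mul_le_mul_of_nonneg_right hu2 hu0.le
        calc (|Real.log M| + 10/κ)*u
            = (C⁻¹/400) * ((400*C*(|Real.log M|+10/κ))*u) := by field_simp
          _ ≤ (C⁻¹/400) * (u*u) := mul_le_mul_of_nonneg_left hm (by positivity)
      calc Real.log M + 5*Real.log x ≤ |Real.log M| * u + (10/κ)*u := add_le_add hLM h5log
        _ = (|Real.log M| + 10/κ)*u := by ring
        _ ≤ (C⁻¹/400)*(u*u) := hquad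
        _ = (C⁻¹/400)*x^κ := by rw [hxκ]
    have hMx5 : M * x^5 ≤ Real.exp (bmE C ε r) := by
      have hpos5 : (0:ℝ) < M * x^5 := by positivity
      have hlogMx : Real.log (M * x^5) = Real.log M + 5 * Real.log x := by
        rw [Real.log_mul hM0.ne' (by positivity), Real.log_pow]
        push_cast
        ring
      calc M*x^5 = Real.exp (Real.log (M*x^5)) := (Real.exp_log hpos5).symm
        _ ≤ Real.exp ((C⁻¹/400)*x^κ) := by
            apply Real.exp_le_exp.2
            rw [hlogMx]
            exact hkey
        _ ≤ Real.exp (bmE C ε r) := Real.exp_le_exp.2 hφ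
    have hfac : 3*((T*Real.log x)+1)*4^n₀ ≤ M * x^3 := by
      have hlx := Real.log_le_sub_one_of_pos hx0
      have hTlog : T*Real.log x + 1 ≤ (T+1)*x := by
        nlinarith [mul_nonneg hT.le (sub_nonneg.2 hlx)]
      have hyx : x^((1:ℝ)/2-ε) ≤ x := by
        have := Real.rpow_le_rpow_of_exponent_le h1 (by linarith : (1:ℝ)/2-ε ≤ 1)
        rwa [Real.rpow_one] at this
      have h2n : (2:ℝ)^n₀ ≤ 2*C⁻¹*x := by
        refine le_trans hn2 ?_
        rw [mul_assoc]
        refine mul_le_mul_of_nonneg_left ?_ (by norm_num)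
        exact mul_le_mul_of_nonneg_left hyx (by positivity)
      have h4n : (4:ℝ)^n₀ ≤ (2*C⁻¹*x)*(2*C⁻¹*x) := by
        rw [show (4:ℝ)^n₀ = 2^n₀ * 2^n₀ by rw [← mul_pow]; norm_num]
        exact mul_le_mul h2n h2n (by positivity) (by positivity)
      have h3T : (0:ℝ) ≤ 3*((T*Real.log x)+1) := by have := mul_nonneg hT.le hlogx; linarith
      calc 3*((T*Real.log x)+1)*4^n₀ ≤ (3*((T+1)*x))*((2*C⁻¹*x)*(2*C⁻¹*x)) := by
            apply mul_le_mul (by linarith) h4n (by positivity) (by positivity)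
        _ = M * x^3 := by rw [hM]; ring
    have hexpE : (0:ℝ) < Real.exp (-(bmE C ε r)) := Real.exp_pos _
    rw [le_div_iff₀ (by positivity : (0:ℝ) < x^2)]
    calc 3*((T*Real.log x)+1)*4^n₀*Real.exp (-(bmE C ε r))*x^2
        ≤ (M*x^3)*Real.exp (-(bmE C ε r))*x^2 :=
          mul_le_mul_of_nonneg_right
            (mul_le_mul_of_nonneg_right hfac hexpE.le) (by positivity)
      _ = (M*x^5)*Real.exp (-(bmE C ε r)) := by ring
      _ ≤ Real.exp (bmE C ε r) * Real.exp (-(bmE C ε r)) :=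
          mul_le_mul_of_nonneg_right hMx5 hexpE.le
      _ = 1 := by rw [← Real.exp_add]; simp
  · -- step size
    have h2n0pos : (0:ℝ) < 2^n₀ := by positivity
    rw [show -(1:ℝ)/2+ε = -((1:ℝ)/2-ε) by ring, Real.rpow_neg hx0.le]
    have hkey : C * (x^((1:ℝ)/2-ε))⁻¹ = 2/(2*(C⁻¹*x^((1:ℝ)/2-ε))) := by
      rw [eq_div_iff (by positivity)]
      field_simp
    rw [hkey]
    exact div_le_div_of_nonneg_left (by norm_num) h2n0pos hn2

lemma geo_step {E : ℝ} (hE : 16 ≤ E) (j : ℕ) :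
    (2:ℝ)^j * Real.exp (-(E*(9/8)^j)) ≤ Real.exp (-E) * (1/2)^j := by
  have hj : 1 + (j:ℝ)*(1/8) ≤ (9/8:ℝ)^j := by
    have := one_add_mul_le_pow (by norm_num : (-2:ℝ) ≤ 1/8) j
    have e : (1:ℝ) + 1/8 = 9/8 := by norm_num
    rw [e] at this
    exact this
  have h2j : (2:ℝ)*j ≤ E*(9/8)^j - E := by nlinarith [(Nat.cast_nonneg j : (0:ℝ) ≤ (j:ℝ))]
  have h4 : (4:ℝ) ≤ Real.exp 2 := by
    have h1 := Real.add_one_le_exp (1:ℝ)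
    have he2 : Real.exp 2 = Real.exp 1 * Real.exp 1 := by
      rw [← Real.exp_add]; norm_num
    nlinarith [Real.exp_pos 1]
  have h1 : (4:ℝ)^j ≤ Real.exp (E*(9/8)^j) / Real.exp E := by
    rw [← Real.exp_sub]
    calc (4:ℝ)^j ≤ (Real.exp 2)^j := pow_le_pow_left₀ (by norm_num : (0:ℝ) ≤ 4) h4 j
      _ = Real.exp ((j:ℕ) * 2) := (Real.exp_nat_mul 2 j).symm
      _ ≤ _ := Real.exp_le_exp.2 (by push_cast; linarith)
  have key : 2^j * Real.exp (-(E*(9/8)^j)) * 2^j ≤ Real.exp (-E) := by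
    calc (2:ℝ)^j * Real.exp (-(E*(9/8)^j)) * 2^j
        = 4^j * Real.exp (-(E*(9/8)^j)) := by
          rw [show (4:ℝ)^j = 2^j * 2^j by rw [← mul_pow]; norm_num]
          ring
      _ ≤ (Real.exp (E*(9/8)^j) / Real.exp E) * Real.exp (-(E*(9/8)^j)) :=
          mul_le_mul_of_nonneg_right h1 (Real.exp_pos _).le
      _ = Real.exp (-E) := by
          rw [Real.exp_neg (E*(9/8)^j), Real.exp_neg E]
          field_simp
  have h12 : ((1:ℝ)/2)^j = 1/2^j := by
    rw [div_pow]; norm_num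
  rw [h12, mul_one_div, le_div_iff₀ (by positivity : (0:ℝ) < 2^j)]
  exact key

lemma bad_bound {Ω : Type*} [MeasureSpace Ω] (B : ℕ → ℝ → Ω → ℝ) (hB : ∀ r, IsStandardBM (B r))
    (T C ε : ℝ) (r : ℕ) (hL : 0 ≤ T * Real.log r) (hE : 16 ≤ bmE C ε r)
    (hnum : 3 * ((T * Real.log r) + 1) * 4^(bmN0 C ε r) * Real.exp (-(bmE C ε r)) ≤ 1/(r:ℝ)^2) :
    volume (bmBad B T C ε r) ≤ ENNReal.ofReal (1/(r:ℝ)^2) := by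
  classical
  set n₀ := bmN0 C ε r with hn₀
  set L := T * Real.log r with hLdef
  set a := bmA r with ha
  have ha0 : 0 ≤ a := by rw [ha, bmA]; positivity
  set E := bmE C ε r with hEdef
  set S : ℕ → ℕ → Set Ω := fun m k => {ω | n₀ ≤ m ∧ (k:ℝ)/2^m ≤ L ∧
    a * (3/4)^(m - n₀) < |B r (((k:ℝ)+1)/2^m) ω - B r ((k:ℝ)/2^m) ω|} with hS
  -- per-event tail bound
  have hone : ∀ m k : ℕ, n₀ ≤ m → (k:ℝ)/2^m ≤ L →
      volume (S m k) ≤ ENNReal.ofReal (Real.sqrt 2 * Real.exp (-(E * (9/8)^(m - n₀)))) := by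
    intro m k hm hkL
    have hc : (0:ℝ) ≤ a * (3/4)^(m - n₀) := by positivity
    have hsub : S m k ⊆ {ω | a * (3/4)^(m - n₀) ≤ |B r (((k:ℝ)+1)/2^m) ω - B r ((k:ℝ)/2^m) ω|} :=
      fun ω hω => le_of_lt hω.2.2
    have h2m : (0:ℝ) < 2^m := by positivity
    have hst : (k:ℝ)/2^m < ((k:ℝ)+1)/2^m := by
      rw [div_lt_div_iff₀ h2m h2m]; nlinarith
    have htail := inc_tail (hB r) (by positivity : (0:ℝ) ≤ (k:ℝ)/2^m) hst hc
    refine le_trans (le_trans (measure_mono hsub) htail) (le_of_eq ?_)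
    congr 2
    have hts : ((k:ℝ)+1)/2^m - (k:ℝ)/2^m = 1/2^m := by ring
    rw [hts]
    -- (a * (3/4)^(m-n₀))^2 / (4 * (1/2^m)) = E * (9/8)^(m-n₀)
    obtain ⟨j, rfl⟩ : ∃ j, m = n₀ + j := ⟨m - n₀, by omega⟩
    rw [Nat.add_sub_cancel_left, hEdef, bmE, ← hn₀, ← ha]
    have e1 : ((3:ℝ)/4)^j * (((3:ℝ)/4)^j * (2:ℝ)^j) = ((9:ℝ)/8)^j := by
      rw [← mul_pow, ← mul_pow]; norm_num
    have h2 : ((2:ℝ))^(n₀+j) = 2^n₀ * 2^j := pow_add 2 n₀ j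
    congr 1
    calc -((a*(3/4)^j)^2) / (4*(1/2^(n₀+j)))
        = -((a^2/4*2^n₀) * ((3/4)^j*((3/4)^j*2^j))) := by
          rw [h2]; field_simp
      _ = -(a^2/4*2^n₀ * (9/8)^j) := by rw [e1]
  -- empty events
  have hempty : ∀ m k : ℕ, (m < n₀ ∨ ¬((k:ℝ)/2^m ≤ L)) → S m k = ∅ := by
    intro m k h
    ext ω
    simp only [hS, Set.mem_setOf_eq, Set.mem_empty_iff_false, iff_false]
    rintro ⟨hm, hkL, _⟩
    rcases h with h | h
    · omega
    · exact h hkL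
  -- union bound
  have hub : volume (bmBad B T C ε r) ≤ ∑' m : ℕ, ∑' k : ℕ, volume (S m k) := by
    rw [bmBad]
    refine le_trans (measure_iUnion_le _) (ENNReal.tsum_le_tsum fun m => measure_iUnion_le _)
  -- bound the inner sum for m = n₀ + j
  have hrow : ∀ j : ℕ, ∑' k : ℕ, volume (S (n₀ + j) k)
      ≤ ENNReal.ofReal (((L+1) * 2^n₀ * Real.sqrt 2 * Real.exp (-E)) * (1/2)^j) := by
    intro j
    set m := n₀ + j with hm
    set N := ⌊L * 2^m⌋₊ + 1 with hN
    have hrow1 : ∑' k : ℕ, volume (S m k) = ∑ k ∈ Finset.range N, volume (S m k) := by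
      refine tsum_eq_sum fun k hk => ?_
      rw [hempty m k]
      · exact measure_empty
      · right
        rw [Finset.mem_range, not_lt] at hk
        intro hle
        have h2m : (0:ℝ) < 2^m := by positivity
        rw [div_le_iff₀ h2m] at hle
        have : L * 2^m < N := Nat.lt_succ_floor _
        have hkN : (N:ℝ) ≤ (k:ℝ) := by exact_mod_cast hk
        linarith
    rw [hrow1]
    have hterm : ∀ k ∈ Finset.range N, volume (S m k)
        ≤ ENNReal.ofReal (Real.sqrt 2 * Real.exp (-(E * (9/8)^j))) := by
      intro k hk
      rw [Finset.mem_range] at hk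
      by_cases hkL : (k:ℝ)/2^m ≤ L
      · have := hone m k (by omega) hkL
        rwa [hm, Nat.add_sub_cancel_left] at this
      · rw [hempty m k (Or.inr hkL)]
        simp
    calc ∑ k ∈ Finset.range N, volume (S m k)
        ≤ ∑ x ∈ Finset.range N, ENNReal.ofReal (Real.sqrt 2 * Real.exp (-(E * (9/8)^j))) :=
          Finset.sum_le_sum hterm
      _ = (N : ENNReal) * ENNReal.ofReal (Real.sqrt 2 * Real.exp (-(E * (9/8)^j))) := by
          rw [Finset.sum_const, Finset.card_range, nsmul_eq_mul]
      _ = ENNReal.ofReal ((N:ℝ) * (Real.sqrt 2 * Real.exp (-(E * (9/8)^j)))) := by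
          rw [← ENNReal.ofReal_natCast N, ← ENNReal.ofReal_mul (by positivity)]
      _ ≤ _ := by
          apply ENNReal.ofReal_le_ofReal
          have hNle : (N:ℝ) ≤ (L+1) * 2^m := by
            have hfl : (⌊L * 2^m⌋₊ : ℝ) ≤ L * 2^m := Nat.floor_le (by positivity)
            have h2m : (1:ℝ) ≤ 2^m := one_le_pow₀ (by norm_num)
            push_cast [hN]
            nlinarith
          have hgeo := geo_step hE j
          have h2m' : ((2:ℝ))^m = 2^n₀ * 2^j := pow_add 2 n₀ j
          calc (N:ℝ) * (Real.sqrt 2 * Real.exp (-(E * (9/8)^j)))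
              ≤ ((L+1) * 2^m) * (Real.sqrt 2 * Real.exp (-(E * (9/8)^j))) := by
                apply mul_le_mul_of_nonneg_right hNle (by positivity)
            _ = ((L+1) * 2^n₀ * Real.sqrt 2) * (2^j * Real.exp (-(E * (9/8)^j))) := by
                rw [h2m']; ring
            _ ≤ ((L+1) * 2^n₀ * Real.sqrt 2) * (Real.exp (-E) * (1/2)^j) := by
                apply mul_le_mul_of_nonneg_left hgeo (by positivity)
            _ = ((L+1) * 2^n₀ * Real.sqrt 2 * Real.exp (-E)) * (1/2)^j := by ring
  -- uniform row bound
  have hrow' : ∀ m : ℕ, ∑' k : ℕ, volume (S m k)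
      ≤ ENNReal.ofReal (((L+1) * 4^n₀ * Real.sqrt 2 * Real.exp (-E)) * (1/2)^m) := by
    intro m
    by_cases hm : n₀ ≤ m
    · obtain ⟨j, rfl⟩ : ∃ j, m = n₀ + j := ⟨m - n₀, by omega⟩
      refine le_trans (hrow j) (le_of_eq ?_)
      congr 1
      have h1 : ((1:ℝ)/2)^(n₀+j) = (1/2)^n₀ * (1/2)^j := pow_add _ _ _
      have h2 : ((4:ℝ))^n₀ = 2^n₀ * 2^n₀ := by rw [← mul_pow]; norm_num
      have h3 : ((2:ℝ))^n₀ * (1/2)^n₀ = 1 := by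
        rw [← mul_pow]; norm_num
      have hcancel : ((1:ℝ)/2)^n₀ * 2^n₀ = 1 := by rw [← mul_pow]; norm_num
      rw [h1, h2]
      calc (L+1) * 2^n₀ * Real.sqrt 2 * Real.exp (-E) * (1/2)^j
          = (L+1) * 2^n₀ * Real.sqrt 2 * Real.exp (-E) * (1/2)^j * ((1/2)^n₀ * 2^n₀) := by
            rw [hcancel, mul_one]
        _ = (L+1) * (2^n₀ * 2^n₀) * Real.sqrt 2 * Real.exp (-E) * ((1/2)^n₀ * (1/2)^j) := by
            ring
    · have : ∑' k : ℕ, volume (S m k) = 0 := by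
        simp only [ENNReal.tsum_eq_zero]
        intro k
        rw [hempty m k (Or.inl (by omega))]
        exact measure_empty
      rw [this]
      positivity
  set K : ℝ := (L+1) * 4^n₀ * Real.sqrt 2 * Real.exp (-E) with hK
  have hK0 : 0 ≤ K := by positivity
  have hsummable : Summable (fun m : ℕ => K * (1/2)^m) :=
    (summable_geometric_of_lt_one (by norm_num) (by norm_num)).mul_left K
  have hsum : ∑' m : ℕ, ∑' k : ℕ, volume (S m k) ≤ ENNReal.ofReal (K * 2) := by
    calc ∑' m : ℕ, ∑' k : ℕ, volume (S m k)
        ≤ ∑' m : ℕ, ENNReal.ofReal (K * (1/2)^m) := ENNReal.tsum_le_tsum hrow'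
      _ = ENNReal.ofReal (∑' m : ℕ, K * (1/2)^m) := by
          rw [ENNReal.ofReal_tsum_of_nonneg (fun m => by positivity) hsummable]
      _ = ENNReal.ofReal (K * 2) := by
          rw [tsum_mul_left, tsum_geometric_of_lt_one (by norm_num) (by norm_num)]
          norm_num
  refine le_trans hub (le_trans hsum (ENNReal.ofReal_le_ofReal ?_))
  have hsqrt2 : Real.sqrt 2 ≤ 3/2 := by
    rw [show (3:ℝ)/2 = Real.sqrt ((3/2)^2) from (Real.sqrt_sq (by norm_num)).symm]
    apply Real.sqrt_le_sqrt
    norm_num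
  have hexp : (0:ℝ) < Real.exp (-E) := Real.exp_pos _
  have h4n : (0:ℝ) < 4^n₀ := by positivity
  have hL1 : (0:ℝ) ≤ L + 1 := by linarith
  calc K * 2 = ((L+1) * 4^n₀ * Real.exp (-E)) * (2 * Real.sqrt 2) := by rw [hK]; ring
    _ ≤ ((L+1) * 4^n₀ * Real.exp (-E)) * 3 := by
        apply mul_le_mul_of_nonneg_left (by linarith) (by positivity)
    _ = 3 * (L + 1) * 4^n₀ * Real.exp (-E) := by ring
    _ ≤ 1/(r:ℝ)^2 := hnum

lemma good_r {Ω : Type*} [MeasureSpace Ω] {B : ℕ → ℝ → Ω → ℝ} (hB : ∀ r, IsStandardBM (B r))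
    (T C ε : ℝ) (r : ℕ) {ω : Ω} (hω : ω ∉ bmBad B T C ε r)
    (hr : 0 < (r:ℝ)) (hd : C * (r:ℝ)^(-(1:ℝ)/2+ε) ≤ 2/2^(bmN0 C ε r)) :
    ∀ t₁ ∈ Set.Icc (0:ℝ) (T * Real.log r), ∀ t₂ ∈ Set.Icc (0:ℝ) (T * Real.log r),
      |t₂ - t₁| ≤ C * (r:ℝ)^(-(1:ℝ)/2+ε) → |B r t₂ ω - B r t₁ ω| < (r:ℝ)^(-(1:ℝ)/8) := by
  intro t₁ h₁ t₂ h₂ hdist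
  have ha0 : 0 ≤ bmA r := by rw [bmA]; positivity
  have H : ∀ m : ℕ, bmN0 C ε r ≤ m → ∀ k : ℕ, (k:ℝ)/2^m ≤ T*Real.log r →
      |(fun t => B r t ω) (((k:ℝ)+1)/2^m) - (fun t => B r t ω) ((k:ℝ)/2^m)|
        ≤ bmA r * (3/4)^(m - bmN0 C ε r) := by
    intro m hm k hk
    by_contra hcon
    apply hω
    rw [bmBad]
    exact Set.mem_iUnion.2 ⟨m, Set.mem_iUnion.2 ⟨k, ⟨hm, hk, lt_of_not_ge hcon⟩⟩⟩
  have hch := chainMain ((hB r).2.1 ω) ha0 (bmN0 C ε r) H h₁ h₂ (le_trans hdist hd)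
  calc |B r t₂ ω - B r t₁ ω| ≤ 9 * bmA r := hch
    _ < (r:ℝ)^(-(1:ℝ)/8) := by
        rw [bmA]
        have hp : 0 < (r:ℝ)^(-(1:ℝ)/8) := Real.rpow_pos_of_pos hr _
        linarith

open Filter in
theorem stmt_5 {Ω : Type*} [MeasureSpace Ω] [IsProbabilityMeasure (volume : Measure Ω)]
    (B : ℕ → ℝ → Ω → ℝ) (hB : ∀ r, IsStandardBM (B r))
    (T C ε : ℝ) (hT : 0 < T) (hC : 0 < C) (hε : ε ∈ Set.Ioo (0:ℝ) (1/4)) :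
    ∀ᵐ ω ∂(volume : Measure Ω), ∀ᶠ r : ℕ in atTop,
      ∀ t₁ ∈ Set.Icc (0:ℝ) (T * Real.log r), ∀ t₂ ∈ Set.Icc (0:ℝ) (T * Real.log r),
        |t₂ - t₁| ≤ C * (r : ℝ) ^ (-(1:ℝ)/2 + ε) →
          |B r t₂ ω - B r t₁ ω| < (r : ℝ) ^ (-(1:ℝ)/8) := by
  classical
  have hev := eventual_facts T C ε hT hC hε
  obtain ⟨R, hR⟩ := eventually_atTop.1 hev
  have hsum : (∑' r : ℕ, volume (bmBad B T C ε r)) ≠ ⊤ := by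
    have hg : ∀ r : ℕ, volume (bmBad B T C ε r)
        ≤ (if r < R then (1:ENNReal) else 0) + ENNReal.ofReal (1/(r:ℝ)^2) := by
      intro r
      by_cases h : r < R
      · simp only [h, if_pos]
        exact le_add_right prob_le_one
      · rw [if_neg h]
        rw [zero_add]
        obtain ⟨f1, f2, f3, _, _⟩ := hR r (by omega)
        exact bad_bound B hB T C ε r f1 f2 f3
    refine ne_top_of_le_ne_top ?_ (ENNReal.tsum_le_tsum hg)
    rw [ENNReal.tsum_add]
    apply ENNReal.add_ne_top.2
    constructor
    · have : (∑' r : ℕ, if r < R then (1:ENNReal) else 0)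
          = ∑ r ∈ Finset.range R, (if r < R then (1:ENNReal) else 0) := by
        refine tsum_eq_sum fun b hb => ?_
        rw [Finset.mem_range, not_lt] at hb
        rw [if_neg (by omega)]
      rw [this]
      refine (lt_top_iff_ne_top.1 (ENNReal.sum_lt_top.2 fun a _ => ?_))
      split <;> simp
    · have hsummable : Summable (fun r : ℕ => 1/(r:ℝ)^2) :=
        Real.summable_one_div_nat_pow.2 (by norm_num)
      rw [← ENNReal.ofReal_tsum_of_nonneg (fun r => by positivity) hsummable]
      exact ENNReal.ofReal_ne_top
  have hBC := MeasureTheory.ae_eventually_notMem hsum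
  filter_upwards [hBC] with ω hω
  filter_upwards [hω, hev] with r h1 h2
  exact good_r hB T C ε r h1 h2.2.2.2.2 h2.2.2.2.1
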